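/- The ring R_m is flat as an O-module (equivalently, since O is a discrete valuation ring, R_m is π-torsion-free). This is the chart-level form of Theorem 5.1(a): the splitting model M^spl_I is flat over O, since its affine charts around the worst point are products of affine spaces with Spec R_m. -/

import Mathlib

/-!
STATEMENT 0: The chart ring `R_m = O[x₁,…,xₘ,y₁,…,yₘ]/I_m` of the splitting model
around the worst point is flat as an `O`-module, where `O` is a DVR in which `2` is a
unit, `π` is a uniformizer, and `I_m` is generated by the 2×2 minors
`xᵢyⱼ − xⱼyᵢ` (`i < j`) together with `(Σᵢ xᵢ y_{m+1−i}) − 2π`.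
-/

open MvPolynomial

/-- The `x`-variables. -/
noncomputable def xVar {m : ℕ} (O : Type*) [CommRing O] (i : Fin m) :
    MvPolynomial (Fin m ⊕ Fin m) O := X (Sum.inl i)

/-- The `y`-variables. -/
noncomputable def yVar {m : ℕ} (O : Type*) [CommRing O] (i : Fin m) :
    MvPolynomial (Fin m ⊕ Fin m) O := X (Sum.inr i)

section Segre
variable (A : Type*) [CommRing A] (m : ℕ)

def minorSet : Set (MvPolynomial (Fin m ⊕ Fin m) A) :=
  {p | ∃ i j : Fin m, i < j ∧ p = xVar A i * yVar A j - xVar A j * yVar A i}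

noncomputable def minorIdeal : Ideal (MvPolynomial (Fin m ⊕ Fin m) A) :=
  Ideal.span (minorSet A m)

noncomputable def segre : MvPolynomial (Fin m ⊕ Fin m) A →ₐ[A] MvPolynomial (Fin m ⊕ Fin 2) A :=
  aeval (Sum.elim (fun i => X (Sum.inr 0) * X (Sum.inl i))
    (fun i => X (Sum.inr 1) * X (Sum.inl i)))

variable {m}

noncomputable def expMap (d : (Fin m ⊕ Fin m) →₀ ℕ) : (Fin m ⊕ Fin 2) →₀ ℕ :=
  Finsupp.equivFunOnFinite.symm
    (Sum.elim (fun i => d (Sum.inl i) + d (Sum.inr i))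
      (fun b => if b = 0 then ∑ i, d (Sum.inl i) else ∑ i, d (Sum.inr i)))

@[simp] lemma expMap_inl (d : (Fin m ⊕ Fin m) →₀ ℕ) (i : Fin m) :
    expMap d (Sum.inl i) = d (Sum.inl i) + d (Sum.inr i) := rfl

@[simp] lemma expMap_inr0 (d : (Fin m ⊕ Fin m) →₀ ℕ) :
    expMap d (Sum.inr 0) = ∑ i, d (Sum.inl i) := rfl

@[simp] lemma expMap_inr1 (d : (Fin m ⊕ Fin m) →₀ ℕ) :
    expMap d (Sum.inr 1) = ∑ i, d (Sum.inr i) := rfl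

lemma prod_monomial_one {ι σ B : Type*} [CommSemiring B] (s : Finset ι) (c : ι → (σ →₀ ℕ)) :
    (∏ v ∈ s, monomial (c v) (1 : B)) = monomial (∑ v ∈ s, c v) 1 := by
  classical
  induction s using Finset.cons_induction with
  | empty => simp
  | cons a s ha ih => rw [Finset.prod_cons, Finset.sum_cons, ih, monomial_mul, one_mul]

/-- the exponent of the image of each variable -/
noncomputable def wExp : (Fin m ⊕ Fin m) → ((Fin m ⊕ Fin 2) →₀ ℕ) :=
  Sum.elim (fun i => Finsupp.single (Sum.inr 0) 1 + Finsupp.single (Sum.inl i) 1)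
    (fun i => Finsupp.single (Sum.inr 1) 1 + Finsupp.single (Sum.inl i) 1)

lemma sum_smul_wExp (d : (Fin m ⊕ Fin m) →₀ ℕ) :
    ∑ v : Fin m ⊕ Fin m, d v • wExp v = expMap d := by
  ext u
  rw [Finset.sum_apply']
  cases u with
  | inl i =>
      rw [expMap_inl, Fintype.sum_sum_type]
      simp [wExp, Finsupp.single_apply]
  | inr b =>
      fin_cases b <;>
      · rw [Fintype.sum_sum_type]
        simp [wExp, Finsupp.single_apply]

lemma segre_monomial (d : (Fin m ⊕ Fin m) →₀ ℕ) (r : A) :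
    segre A m (monomial d r) = monomial (expMap d) r := by
  rw [segre, aeval_monomial, Finsupp.prod_fintype _ _ (fun i => pow_zero _)]
  have h1 : ∀ v : Fin m ⊕ Fin m,
      (Sum.elim (fun i => X (Sum.inr 0) * X (Sum.inl i))
        (fun i => X (Sum.inr 1) * X (Sum.inl i)) v : MvPolynomial (Fin m ⊕ Fin 2) A)
        = monomial (wExp v) 1 := by
    have hX : ∀ u : Fin m ⊕ Fin 2,
        (X u : MvPolynomial (Fin m ⊕ Fin 2) A) = monomial (Finsupp.single u 1) 1 := by
      intro u; rw [← pow_one (X u), X_pow_eq_monomial]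
    rintro (i | i)
    · rw [Sum.elim_inl, hX, hX, monomial_mul, one_mul]; rfl
    · rw [Sum.elim_inr, hX, hX, monomial_mul, one_mul]; rfl
  calc (algebraMap A _) r * ∏ v : Fin m ⊕ Fin m,
        (Sum.elim (fun i => X (Sum.inr 0) * X (Sum.inl i))
          (fun i => X (Sum.inr 1) * X (Sum.inl i)) v) ^ d v
      = C r * ∏ v : Fin m ⊕ Fin m, monomial (d v • wExp v) 1 := by
        rw [algebraMap_eq]
        congr 1
        refine Finset.prod_congr rfl fun v _ => ?_
        rw [h1 v, monomial_pow, one_pow]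
    _ = monomial (expMap d) r := by
        rw [prod_monomial_one, sum_smul_wExp, C_mul_monomial, mul_one]

end Segre

section Exchange
variable (A : Type*) [CommRing A] {m : ℕ}

lemma minor_mem {i j : Fin m} (hij : i ≠ j) :
    xVar A i * yVar A j - xVar A j * yVar A i ∈ minorIdeal A m := by
  rcases hij.lt_or_gt with h | h
  · exact Ideal.subset_span ⟨i, j, h, rfl⟩
  · have h1 : xVar A j * yVar A i - xVar A i * yVar A j ∈ minorIdeal A m :=
      Ideal.subset_span ⟨j, i, h, rfl⟩
    have := neg_mem h1
    rwa [neg_sub] at this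

lemma exchange_aux :
    ∀ (N : ℕ) (d d' : (Fin m ⊕ Fin m) →₀ ℕ),
      (∑ l, Nat.dist (d (Sum.inl l)) (d' (Sum.inl l))) = N →
      (∀ l, d (Sum.inl l) + d (Sum.inr l) = d' (Sum.inl l) + d' (Sum.inr l)) →
      ((∑ l, d (Sum.inl l)) = ∑ l, d' (Sum.inl l)) →
      monomial d (1 : A) - monomial d' 1 ∈ minorIdeal A m := by
  intro N
  induction N using Nat.strong_induction_on with
  | _ N ih =>
  intro d d' hN h1 h2
  by_cases hdd : ∀ l, d (Sum.inl l) = d' (Sum.inl l)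
  · have hdd' : d = d' := by
      ext u
      cases u with
      | inl l => exact hdd l
      | inr l => have := h1 l; have := hdd l; omega
    rw [hdd', sub_self]
    exact zero_mem _
  · push_neg at hdd
    obtain ⟨i₀, hi₀⟩ := hdd
    have hA : ∃ i, d' (Sum.inl i) < d (Sum.inl i) := by
      by_contra hc
      push_neg at hc
      have : ∑ l, d (Sum.inl l) < ∑ l, d' (Sum.inl l) :=
        Finset.sum_lt_sum (fun l _ => hc l) ⟨i₀, Finset.mem_univ _, (hc i₀).lt_of_ne hi₀⟩
      omega
    have hB : ∃ j, d (Sum.inl j) < d' (Sum.inl j) := by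
      by_contra hc
      push_neg at hc
      have : ∑ l, d' (Sum.inl l) < ∑ l, d (Sum.inl l) :=
        Finset.sum_lt_sum (fun l _ => hc l) ⟨i₀, Finset.mem_univ _,
          (hc i₀).lt_of_ne fun e => hi₀ e.symm⟩
      omega
    obtain ⟨i, hi⟩ := hA
    obtain ⟨j, hj⟩ := hB
    have hij : i ≠ j := by rintro rfl; omega
    have hdi : 1 ≤ d (Sum.inl i) := by omega
    have hdj : 1 ≤ d (Sum.inr j) := by have := h1 j; omega
    set c : (Fin m ⊕ Fin m) →₀ ℕ :=
      Finsupp.equivFunOnFinite.symm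
        (fun u => d u - (if Sum.inl i = u then 1 else 0) - (if Sum.inr j = u then 1 else 0))
      with hcdef
    have hcu : ∀ u, c u
        = d u - (if Sum.inl i = u then 1 else 0) - (if Sum.inr j = u then 1 else 0) :=
      fun u => rfl
    set d'' : (Fin m ⊕ Fin m) →₀ ℕ :=
      c + (Finsupp.single (Sum.inl j) 1 + Finsupp.single (Sum.inr i) 1) with hd''def
    have hd''u : ∀ u, d'' u
        = c u + ((if Sum.inl j = u then 1 else 0) + (if Sum.inr i = u then 1 else 0)) := by
      intro u
      rw [hd''def, Finsupp.add_apply, Finsupp.add_apply, Finsupp.single_apply,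
        Finsupp.single_apply]
    -- pointwise descriptions without truncated subtraction
    have Dl : ∀ l, d'' (Sum.inl l) + (if i = l then 1 else 0)
        = d (Sum.inl l) + (if j = l then 1 else 0) := by
      intro l
      have e := hd''u (Sum.inl l)
      have e' := hcu (Sum.inl l)
      rw [if_neg (Sum.inr_ne_inl)] at e
      rw [if_neg (Sum.inr_ne_inl)] at e'
      rcases eq_or_ne i l with rfl | hil
      · rw [if_pos rfl] at e'
        rcases eq_or_ne j i with rfl | hji
        · exact absurd rfl hij.symm
        · rw [if_neg (fun h => hji (Sum.inl.inj h))] at e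
          rw [if_pos rfl, if_neg hji]
          omega
      · rw [if_neg (fun h => hil (Sum.inl.inj h))] at e'
        rw [if_neg hil]
        rcases eq_or_ne j l with rfl | hjl
        · rw [if_pos rfl] at e
          rw [if_pos rfl]
          omega
        · rw [if_neg (fun h => hjl (Sum.inl.inj h))] at e
          rw [if_neg hjl]
          omega
    have Dr : ∀ l, d'' (Sum.inr l) + (if j = l then 1 else 0)
        = d (Sum.inr l) + (if i = l then 1 else 0) := by
      intro l
      have e := hd''u (Sum.inr l)
      have e' := hcu (Sum.inr l)
      rw [if_neg (Sum.inl_ne_inr)] at e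
      rw [if_neg (Sum.inl_ne_inr)] at e'
      rcases eq_or_ne j l with rfl | hjl
      · rw [if_pos rfl] at e'
        rcases eq_or_ne i j with rfl | hij'
        · exact absurd rfl hij
        · rw [if_neg (fun h => hij' (Sum.inr.inj h))] at e
          rw [if_pos rfl, if_neg hij']
          omega
      · rw [if_neg (fun h => hjl (Sum.inr.inj h))] at e'
        rw [if_neg hjl]
        rcases eq_or_ne i l with rfl | hil
        · rw [if_pos rfl] at e
          rw [if_pos rfl]
          omega
        · rw [if_neg (fun h => hil (Sum.inr.inj h))] at e
          rw [if_neg hil]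
          omega
    have h1'' : ∀ l, d'' (Sum.inl l) + d'' (Sum.inr l) = d' (Sum.inl l) + d' (Sum.inr l) := by
      intro l
      have e1 := Dl l
      have e2 := Dr l
      have e3 := h1 l
      omega
    have h2'' : (∑ l, d'' (Sum.inl l)) = ∑ l, d' (Sum.inl l) := by
      have e : (∑ l, (d'' (Sum.inl l) + if i = l then 1 else 0))
          = ∑ l, (d (Sum.inl l) + if j = l then 1 else 0) :=
        Finset.sum_congr rfl fun l _ => Dl l
      rw [Finset.sum_add_distrib, Finset.sum_add_distrib, Finset.sum_ite_eq,
        Finset.sum_ite_eq] at e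
      simp only [Finset.mem_univ, if_pos] at e
      omega
    -- the measure strictly decreases
    have hmeas : (∑ l, Nat.dist (d'' (Sum.inl l)) (d' (Sum.inl l))) < N := by
      rw [← hN]
      refine Finset.sum_lt_sum (fun l _ => ?_) ⟨i, Finset.mem_univ _, ?_⟩
      · have e1 := Dl l
        rcases eq_or_ne i l with rfl | hil
        · rw [if_pos rfl] at e1
          rcases eq_or_ne j i with rfl | hji
          · exact absurd rfl hij.symm
          · rw [if_neg hji] at e1
            simp only [Nat.dist]
            omega
        · rw [if_neg hil] at e1
          rcases eq_or_ne j l with rfl | hjl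
          · rw [if_pos rfl] at e1
            simp only [Nat.dist]
            omega
          · rw [if_neg hjl] at e1
            simp only [Nat.dist]
            omega
      · have e1 := Dl i
        rw [if_pos rfl, if_neg (fun e => hij e.symm)] at e1
        simp only [Nat.dist]
        omega
    -- the single exchange step lies in the minor ideal
    have hd : c + (Finsupp.single (Sum.inl i) 1 + Finsupp.single (Sum.inr j) 1) = d := by
      ext u
      rw [Finsupp.add_apply, Finsupp.add_apply, Finsupp.single_apply, Finsupp.single_apply, hcu]
      rcases u with l | l
      · simp only [reduceCtorEq, if_false]
        rcases eq_or_ne i l with rfl | hil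
        · rw [if_pos rfl]
          omega
        · rw [if_neg (fun h => hil (Sum.inl.inj h))]
          omega
      · simp only [reduceCtorEq, if_false]
        rcases eq_or_ne j l with rfl | hjl
        · rw [if_pos rfl]
          omega
        · rw [if_neg (fun h => hjl (Sum.inr.inj h))]
          omega
    have hX : ∀ u v : Fin m ⊕ Fin m,
        (X u * X v : MvPolynomial (Fin m ⊕ Fin m) A)
          = monomial (Finsupp.single u 1 + Finsupp.single v 1) 1 := by
      intro u v
      rw [← pow_one (X u : MvPolynomial (Fin m ⊕ Fin m) A),
        ← pow_one (X v : MvPolynomial (Fin m ⊕ Fin m) A), X_pow_eq_monomial,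
        X_pow_eq_monomial, monomial_mul, one_mul]
    have hmon : monomial d (1 : A) - monomial d'' 1
        = monomial c 1 * (xVar A i * yVar A j - xVar A j * yVar A i) := by
      rw [mul_sub, xVar, yVar, xVar, yVar, hX, hX, monomial_mul, monomial_mul, one_mul, hd,
        hd''def]
    have step1 : monomial d (1 : A) - monomial d'' 1 ∈ minorIdeal A m := by
      rw [hmon]
      exact Ideal.mul_mem_left _ _ (minor_mem A hij)
    have step2 : monomial d'' (1 : A) - monomial d' 1 ∈ minorIdeal A m :=
      ih _ hmeas d'' d' rfl h1'' h2''
    have : monomial d (1 : A) - monomial d' 1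
        = (monomial d 1 - monomial d'' 1) + (monomial d'' 1 - monomial d' 1) := by ring
    rw [this]
    exact add_mem step1 step2

lemma exchange {d d' : (Fin m ⊕ Fin m) →₀ ℕ} (h : expMap d = expMap d') :
    monomial d (1 : A) - monomial d' 1 ∈ minorIdeal A m := by
  refine exchange_aux A _ d d' rfl (fun l => ?_) ?_
  · have := congrArg (fun e => e (Sum.inl l)) h
    simpa using this
  · have := congrArg (fun e => e (Sum.inr 0)) h
    simpa using this

end Exchange

section Kernel
variable (A : Type*) [CommRing A] {m : ℕ}

lemma segre_vanish {p : MvPolynomial (Fin m ⊕ Fin m) A} (hp : p ∈ minorIdeal A m) :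
    segre A m p = 0 := by
  have hle : minorIdeal A m ≤ RingHom.ker (segre A m).toRingHom := by
    rw [minorIdeal, Ideal.span_le]
    rintro q ⟨i, j, hij, rfl⟩
    have : segre A m (xVar A i * yVar A j - xVar A j * yVar A i) = 0 := by
      simp only [map_sub, map_mul, xVar, yVar, segre, aeval_X, Sum.elim_inl, Sum.elim_inr]
      ring
    simpa [RingHom.mem_ker] using this
  exact hle hp

lemma mem_minorIdeal_of_segre_eq_zero {f : MvPolynomial (Fin m ⊕ Fin m) A}
    (hf : segre A m f = 0) : f ∈ minorIdeal A m := by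
  classical
  set ρ : ((Fin m ⊕ Fin m) →₀ ℕ) → ((Fin m ⊕ Fin m) →₀ ℕ) :=
    fun d => Function.invFun (expMap (m := m)) (expMap d) with hρ
  have hρK : ∀ d, expMap (ρ d) = expMap d := fun d => Function.invFun_eq ⟨d, rfl⟩
  have hρeq : ∀ d d', expMap d = expMap d' → ρ d = ρ d' := by
    intro d d' h
    rw [hρ]
    simp only [h]
  have hsum : segre A m f = ∑ d ∈ f.support, monomial (expMap d) (coeff d f) := by
    conv_lhs => rw [as_sum f]
    rw [map_sum]
    exact Finset.sum_congr rfl fun d _ => segre_monomial A d _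
  have hcoeff : ∀ E, (∑ d ∈ f.support.filter (fun d => expMap d = E), coeff d f) = 0 := by
    intro E
    have h0 : coeff E (segre A m f) = 0 := by rw [hf]; exact coeff_zero E
    rw [hsum, coeff_sum] at h0
    rw [Finset.sum_filter]
    have hce : ∀ d ∈ f.support, (if expMap d = E then coeff d f else 0)
        = coeff E (monomial (expMap d) (coeff d f)) :=
      fun d _ => (coeff_monomial E (expMap d) _).symm
    rw [Finset.sum_congr rfl hce]
    exact h0
  have hsplit : f = (∑ d ∈ f.support, (monomial d (coeff d f) - monomial (ρ d) (coeff d f)))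
      + ∑ d ∈ f.support, monomial (ρ d) (coeff d f) := by
    rw [← Finset.sum_add_distrib]
    conv_lhs => rw [as_sum f]
    exact Finset.sum_congr rfl fun d _ => (sub_add_cancel _ _).symm
  rw [hsplit]
  refine add_mem (Submodule.sum_mem _ fun d _ => ?_) ?_
  · have hc : monomial d (coeff d f) - monomial (ρ d) (coeff d f)
        = C (coeff d f) * (monomial d 1 - monomial (ρ d) 1) := by
      rw [mul_sub, C_mul_monomial, C_mul_monomial, mul_one]
    rw [hc]
    exact Ideal.mul_mem_left _ _ (exchange A (hρK d).symm)
  · have hz : (∑ d ∈ f.support, monomial (ρ d) (coeff d f)) = 0 := by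
      rw [← Finset.sum_fiberwise_of_maps_to (t := f.support.image ρ)
        (fun d hd => Finset.mem_image_of_mem ρ hd) (fun d => monomial (ρ d) (coeff d f))]
      refine Finset.sum_eq_zero fun e he => ?_
      obtain ⟨d₀, hd₀, rfl⟩ := Finset.mem_image.mp he
      have hcongr : ∀ d ∈ f.support.filter (fun d => ρ d = ρ d₀),
          monomial (ρ d) (coeff d f) = monomial (ρ d₀) (coeff d f) := by
        intro d hd
        rw [(Finset.mem_filter.mp hd).2]
      rw [Finset.sum_congr rfl hcongr, ← map_sum]
      have hfilter : f.support.filter (fun d => ρ d = ρ d₀)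
          = f.support.filter (fun d => expMap d = expMap d₀) := by
        refine Finset.filter_congr fun d _ => ?_
        constructor
        · intro h
          rw [← hρK d, h, hρK d₀]
        · intro h
          exact hρeq d d₀ h
      rw [hfilter, hcoeff (expMap d₀), map_zero]
    rw [hz]
    exact zero_mem _

end Kernel

section Transfer
variable {A B : Type*} [CommRing A] [CommRing B] {m : ℕ}

lemma minorIdeal_map (r : A →+* B) :
    Ideal.map (MvPolynomial.map r) (minorIdeal A m) = minorIdeal B m := by
  rw [minorIdeal, Ideal.map_span, minorIdeal]
  refine le_antisymm (Ideal.span_le.2 ?_) (Ideal.span_le.2 ?_)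
  · rintro _ ⟨q, ⟨i, j, hij, rfl⟩, rfl⟩
    refine Ideal.subset_span ⟨i, j, hij, ?_⟩
    simp [xVar, yVar, MvPolynomial.map_X]
  · rintro q ⟨i, j, hij, rfl⟩
    refine Ideal.subset_span ⟨xVar A i * yVar A j - xVar A j * yVar A i, ⟨i, j, hij, rfl⟩, ?_⟩
    simp [xVar, yVar, MvPolynomial.map_X]

end Transfer

section NonVanish
variable (k : Type*) [Field k]

lemma segre_q_ne_zero (m : ℕ) (hm : 3 ≤ m) (h2 : (2 : k) ≠ 0) :
    segre k m (∑ i : Fin m, xVar k i * yVar k i.rev) ≠ 0 := by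
  classical
  intro h0
  set i₀ : Fin m := ⟨0, by omega⟩ with hi₀def
  set i₁ : Fin m := i₀.rev with hi₁def
  have hne : i₀ ≠ i₁ := by
    intro h
    have h1 : (i₀ : ℕ) = (i₁ : ℕ) := congrArg Fin.val h
    rw [hi₁def, Fin.val_rev] at h1
    have h2 : (i₀ : ℕ) = 0 := rfl
    omega
  set pt : (Fin m ⊕ Fin 2) → k :=
    Sum.elim (fun i => if i = i₀ ∨ i = i₁ then 1 else 0) (fun _ => 1) with hpt
  have hx : ∀ i : Fin m, eval pt (segre k m (xVar k i))
      = (if i = i₀ ∨ i = i₁ then (1 : k) else 0) := by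
    intro i
    rw [xVar, segre, aeval_X]
    simp [hpt]
  have hy : ∀ i : Fin m, eval pt (segre k m (yVar k i))
      = (if i = i₀ ∨ i = i₁ then (1 : k) else 0) := by
    intro i
    rw [yVar, segre, aeval_X]
    simp [hpt]
  have hz := congrArg (eval pt) h0
  rw [map_zero, map_sum, map_sum] at hz
  have hterm : ∀ i : Fin m, eval pt (segre k m (xVar k i * yVar k i.rev))
      = (if i = i₀ ∨ i = i₁ then (1 : k) else 0) := by
    intro i
    rw [map_mul, map_mul, hx, hy]
    by_cases h : i = i₀ ∨ i = i₁
    · rcases h with rfl | rfl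
      · rw [if_pos (Or.inl rfl), one_mul, if_pos (Or.inr hi₁def.symm)]
      · rw [if_pos (Or.inr rfl), one_mul, if_pos (Or.inl (by rw [hi₁def, Fin.rev_rev]))]
    · rw [if_neg h, zero_mul]
  rw [Finset.sum_congr rfl (fun i _ => hterm i)] at hz
  rw [Finset.sum_boole] at hz
  have hcard : (Finset.univ.filter (fun i : Fin m => i = i₀ ∨ i = i₁)).card = 2 := by
    have : (Finset.univ.filter (fun i : Fin m => i = i₀ ∨ i = i₁)) = {i₀, i₁} := by
      ext i
      simp [Finset.mem_filter, Finset.mem_insert, Finset.mem_singleton]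
    rw [this, Finset.card_insert_of_notMem (by simpa using hne), Finset.card_singleton]
  rw [hcard] at hz
  exact h2 (by exact_mod_cast hz)

end NonVanish

/-- The ideal `I_m`, generated by the 2×2 minors `xᵢyⱼ − xⱼyᵢ` for `i < j` together with
`(Σ_{i=1}^m xᵢ y_{m+1−i}) − 2π`  (here `Fin.rev` realizes `i ↦ m+1−i` in 0-indexing). -/
noncomputable def splitChartIdeal (O : Type*) [CommRing O] (π : O) (m : ℕ) :
    Ideal (MvPolynomial (Fin m ⊕ Fin m) O) :=
  Ideal.span
    ({p | ∃ i j : Fin m, i < j ∧ p = xVar O i * yVar O j - xVar O j * yVar O i} ∪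
      {(∑ i : Fin m, xVar O i * yVar O i.rev) - C (2 * π)})

set_option maxHeartbeats 1000000 in
set_option synthInstance.maxHeartbeats 1000000 in
/-- The chart ring `R_m` of the splitting model is flat over `O`. -/
theorem splitChart_flat (O : Type*) [CommRing O] [IsDomain O] [IsDiscreteValuationRing O]
    (h2 : IsUnit (2 : O)) (π : O) (hπ : Ideal.span {π} = IsLocalRing.maximalIdeal O)
    (m : ℕ) (hm : 3 ≤ m) :
    Module.Flat O (MvPolynomial (Fin m ⊕ Fin m) O ⧸ splitChartIdeal O π m) := by
  classical
  have hirr : Irreducible π := (IsDiscreteValuationRing.irreducible_iff_uniformizer π).mpr hπ.symm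
  have hπ0 : π ≠ 0 := hirr.ne_zero
  set k := IsLocalRing.ResidueField O with hk
  set res : O →+* k := IsLocalRing.residue O with hres
  have hresπ : res π = 0 := by
    have hmem : π ∈ IsLocalRing.maximalIdeal O := hπ ▸ Ideal.subset_span rfl
    exact Ideal.Quotient.eq_zero_iff_mem.mpr hmem
  have h2k : (2 : k) ≠ 0 := by
    have h2u : IsUnit (2 : k) := by
      have := h2.map res
      rwa [map_ofNat] at this
    exact h2u.ne_zero
  set q : MvPolynomial (Fin m ⊕ Fin m) O := ∑ i : Fin m, xVar O i * yVar O i.rev with hq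
  set g : MvPolynomial (Fin m ⊕ Fin m) O := q - C (2 * π) with hg
  have hI : splitChartIdeal O π m = minorIdeal O m ⊔ Ideal.span {g} := by
    rw [splitChartIdeal, Ideal.span_union, minorIdeal, minorSet]
  -- key torsion lemma
  have key : ∀ f : MvPolynomial (Fin m ⊕ Fin m) O,
      C π * f ∈ splitChartIdeal O π m → f ∈ splitChartIdeal O π m := by
    intro f hf
    rw [hI] at hf
    obtain ⟨j, hj, s, hs, hsum⟩ := Submodule.mem_sup.mp hf
    obtain ⟨b, rfl⟩ := Ideal.mem_span_singleton.mp hs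
    set ρ : MvPolynomial (Fin m ⊕ Fin m) O →+* MvPolynomial (Fin m ⊕ Fin m) k :=
      MvPolynomial.map res with hρ
    have hρCπ : ρ (C π * f) = 0 := by
      rw [map_mul, hρ, MvPolynomial.map_C, hresπ, C_0, zero_mul]
    have hred : ρ j + ρ g * ρ b = 0 := by
      have h1 := congrArg ρ hsum
      rw [map_add, map_mul, hρCπ] at h1
      exact h1
    have hρg : ρ g = ∑ i : Fin m, xVar k i * yVar k i.rev := by
      rw [hg, map_sub, hρ, MvPolynomial.map_C]
      have h1 : res (2 * π) = 0 := by rw [map_mul, hresπ, mul_zero]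
      rw [h1, C_0, sub_zero, hq, map_sum]
      refine Finset.sum_congr rfl fun i _ => ?_
      rw [map_mul, xVar, yVar, MvPolynomial.map_X, MvPolynomial.map_X]
      rfl
    have hρj : ρ j ∈ minorIdeal k m := by
      rw [← minorIdeal_map (m := m) res]
      exact Ideal.mem_map_of_mem ρ hj
    have hqb : (∑ i : Fin m, xVar k i * yVar k i.rev) * ρ b ∈ minorIdeal k m := by
      have h1 : (∑ i : Fin m, xVar k i * yVar k i.rev) * ρ b = -ρ j := by
        rw [← hρg]
        linear_combination hred
      rw [h1]
      exact neg_mem hρj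
    have hsegreb : segre k m (ρ b) = 0 := by
      have h1 := segre_vanish k hqb
      rw [map_mul] at h1
      exact (mul_eq_zero.mp h1).resolve_left (segre_q_ne_zero k m hm h2k)
    have hbk : ρ b ∈ minorIdeal k m := mem_minorIdeal_of_segre_eq_zero k hsegreb
    have hbmap : ρ b ∈ Ideal.map ρ (minorIdeal O m) := by
      rw [hρ, minorIdeal_map]
      exact hbk
    obtain ⟨a, ha, hab⟩ := (Ideal.mem_map_iff_of_surjective ρ
      (MvPolynomial.map_surjective res Ideal.Quotient.mk_surjective)).mp hbmap
    have hker : b - a ∈ RingHom.ker ρ := by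
      rw [RingHom.mem_ker, map_sub, hab, sub_self]
    have hkerspan : RingHom.ker ρ = Ideal.span {(C π : MvPolynomial (Fin m ⊕ Fin m) O)} := by
      rw [hρ, MvPolynomial.ker_map]
      have h1 : RingHom.ker res = Ideal.span {π} := by
        rw [hres]; exact Ideal.mk_ker.trans hπ.symm
      rw [h1, Ideal.map_span, Set.image_singleton]
    rw [hkerspan, Ideal.mem_span_singleton] at hker
    obtain ⟨b', hb'⟩ := hker
    have hmem : C π * (f - g * b') ∈ minorIdeal O m := by
      have h1 : C π * (f - g * b') = j + g * a := by
        linear_combination -hsum + g * hb'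
      rw [h1]
      exact add_mem hj (Ideal.mul_mem_left _ _ ha)
    have h0 : segre O m (C π * (f - g * b')) = 0 := segre_vanish O hmem
    rw [map_mul] at h0
    have hCπ : segre O m (C π) = C π := by
      rw [segre, aeval_C, algebraMap_eq]
    rw [hCπ] at h0
    have hseg0 : segre O m (f - g * b') = 0 :=
      (mul_eq_zero.mp h0).resolve_left (fun h => hπ0 (C_eq_zero.mp h))
    have hf' : f - g * b' ∈ minorIdeal O m := mem_minorIdeal_of_segre_eq_zero O hseg0
    rw [hI]
    have h1 : f = (f - g * b') + g * b' := by ring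
    rw [h1]
    exact Submodule.add_mem _ (Ideal.mem_sup_left hf')
      (Ideal.mem_sup_right (Ideal.mem_span_singleton.mpr ⟨b', rfl⟩))
  -- π-regularity on the quotient
  set R := MvPolynomial (Fin m ⊕ Fin m) O ⧸ splitChartIdeal O π m with hR
  have hπreg : ∀ x : R, π • x = 0 → x = 0 := by
    intro x hx
    obtain ⟨f, rfl⟩ := Ideal.Quotient.mkₐ_surjective O (splitChartIdeal O π m) x
    have h1 : π • (Ideal.Quotient.mkₐ O (splitChartIdeal O π m)) f
        = (Ideal.Quotient.mkₐ O (splitChartIdeal O π m)) (C π * f) := by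
      rw [← smul_eq_C_mul, map_smul]
    rw [h1, Ideal.Quotient.mkₐ_eq_mk, Ideal.Quotient.eq_zero_iff_mem] at hx
    rw [Ideal.Quotient.mkₐ_eq_mk, Ideal.Quotient.eq_zero_iff_mem]
    exact key f hx
  have hpowreg : ∀ (n : ℕ) (x : R), π ^ n • x = 0 → x = 0 := by
    intro n
    induction n with
    | zero => intro x hx; simpa using hx
    | succ n ihn =>
        intro x hx
        rw [pow_succ', mul_smul] at hx
        exact ihn _ (hπreg _ hx)
  have hreg : ∀ a : O, a ≠ 0 → Function.Injective (fun x : R => a • x) := by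
    intro a ha x y hxy
    obtain ⟨n, u, hu⟩ := IsDiscreteValuationRing.eq_unit_mul_pow_irreducible ha hirr
    simp only at hxy
    have h1 : a • (x - y) = 0 := by rw [smul_sub, hxy, sub_self]
    rw [hu, mul_smul] at h1
    have h2 : π ^ n • (x - y) = 0 := by
      have h3 := congrArg (fun z => (↑u⁻¹ : O) • z) h1
      simpa [← mul_smul] using h3
    have := hpowreg n _ h2
    exact sub_eq_zero.mp this
  -- conclude flatness
  rw [Module.Flat.iff_rTensor_injective']
  intro I₀
  obtain ⟨a, ha⟩ : ∃ a, I₀ = Ideal.span {a} :=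
    ⟨Submodule.IsPrincipal.generator I₀, (Submodule.IsPrincipal.span_singleton_generator I₀).symm⟩
  by_cases ha0 : a = 0
  · subst ha0
    rw [Set.singleton_zero, Ideal.span_zero] at ha
    subst ha
    have hz : ∀ z : TensorProduct O (⊥ : Ideal O) R, z = 0 := by
      intro z
      induction z using TensorProduct.induction_on with
      | zero => rfl
      | tmul r x =>
          have hr : r = 0 := Subtype.ext ((Submodule.mem_bot O).mp r.2)
          rw [hr, TensorProduct.zero_tmul]
      | add x y hx hy => rw [hx, hy, add_zero]
    intro x y _
    rw [hz x, hz y]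
  · subst ha
    set e : O ≃ₗ[O] (Submodule.span O {a} : Submodule O O) :=
      LinearEquiv.toSpanNonzeroSingleton O O a ha0 with he
    set E : (TensorProduct O O R) ≃ₗ[O] (TensorProduct O (Submodule.span O {a} : Submodule O O) R) :=
      LinearEquiv.rTensor R e with hE
    set rT : (TensorProduct O (Submodule.span O {a} : Submodule O O) R) →ₗ[O] (TensorProduct O O R) :=
      LinearMap.rTensor R (Submodule.span O {a}).subtype with hrT
    set L : (TensorProduct O O R) →ₗ[O] R :=
      (TensorProduct.lid O R).toLinearMap ∘ₗ rT ∘ₗ E.toLinearMap with hL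
    have hLval : ∀ z, L z = a • (TensorProduct.lid O R) z := by
      intro z
      induction z using TensorProduct.induction_on with
      | zero => simp
      | tmul r x =>
          rw [hL]
          simp only [LinearMap.coe_comp, Function.comp_apply, LinearEquiv.coe_coe, hE,
            LinearEquiv.rTensor_tmul, hrT, LinearMap.rTensor_tmul, Submodule.coe_subtype,
            TensorProduct.lid_tmul, he, LinearEquiv.toSpanNonzeroSingleton_apply]
          rw [smul_eq_mul, mul_comm, mul_smul]
      | add x y hx hy => rw [map_add, hx, hy, map_add, smul_add]
    have hLinj : Function.Injective L := by
      have h1 : ⇑L = (fun x : R => a • x) ∘ ⇑(TensorProduct.lid O R) := funext hLval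
      rw [h1]
      exact (hreg a ha0).comp (TensorProduct.lid O R).injective
    have h2 : Function.Injective (⇑rT ∘ ⇑E) := by
      have h3 : ⇑L = ⇑(TensorProduct.lid O R) ∘ (⇑rT ∘ ⇑E) := rfl
      rw [h3] at hLinj
      exact hLinj.of_comp
    intro x y hxy
    have h4 : (⇑rT ∘ ⇑E) (E.symm x) = (⇑rT ∘ ⇑E) (E.symm y) := by
      simp only [Function.comp_apply, E.apply_symm_apply]
      exact hxy
    exact E.symm.injective (h2 h4)
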